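/- Optimal partitions have no empty intervals: if φ: [0,∞) → [0,∞) is strictly convex and {I_j} ∈ 𝒞_n minimizes (1/n)·Σ_j φ(n/λ(I_j)^{1/2}), where λ(I) = π²/|I|² for nonempty I (the Laplacian case p = w = 1, q = 0) and λ(∅) = +∞, then all intervals I_j are nonempty, i.e. x_{j−1} < x_j for all j. -/

import Mathlib

open Real Set

/-- Optimal partitions have no empty intervals (Laplacian case `p = w = 1`, `q = 0`, so
`λ(I) = π²/|I|²` and the cost is `(1/n) Σ_j φ(n |I_j|/π)`, with empty intervals
contributing `φ(0)`): if `φ` is strictly convex and `x` is a minimizing partition, then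
`x_{j−1} < x_j` for every `j`. -/
theorem stmt10 (φ : ℝ → ℝ) (hφ : StrictConvexOn ℝ (Set.Ici 0) φ)
    (h0 : ∀ t ∈ Set.Ici (0 : ℝ), 0 ≤ φ t)
    (n : ℕ) (hn : 1 ≤ n)
    (x : Fin (n + 1) → ℝ) (hx : Monotone x) (hx0 : x 0 = 0) (hx1 : x (Fin.last n) = 1)
    (hmin : ∀ y : Fin (n + 1) → ℝ, Monotone y → y 0 = 0 → y (Fin.last n) = 1 →
      (1 / (n : ℝ)) * ∑ j : Fin n, φ ((n : ℝ) * (x j.succ - x j.castSucc) / π) ≤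
        (1 / (n : ℝ)) * ∑ j : Fin n, φ ((n : ℝ) * (y j.succ - y j.castSucc) / π)) :
    ∀ j : Fin n, x j.castSucc < x j.succ := by
  have hn0 : (0 : ℝ) < n := by exact_mod_cast hn
  have hπ : (0 : ℝ) < π := Real.pi_pos
  set ℓ : Fin n → ℝ := fun j => x j.succ - x j.castSucc with hℓdef
  have hℓ0 : ∀ j, 0 ≤ ℓ j := fun j => sub_nonneg.2 (hx j.castSucc_le_succ)
  -- telescoping sum
  set f : ℕ → ℝ := fun i => x ⟨min i n, by omega⟩ with hfdef
  have hf : ∀ j : Fin n, ℓ j = f (j + 1) - f j := by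
    intro j
    have h1 : (j.succ : Fin (n + 1)) = ⟨min (j + 1) n, by omega⟩ := by
      ext; simp [Nat.min_eq_left j.isLt]
    have h2 : (j.castSucc : Fin (n + 1)) = ⟨min (j : ℕ) n, by omega⟩ := by
      ext; simp [Nat.min_eq_left j.isLt.le]
    simp [ℓ, f, h1, h2]
  have hℓsum : ∑ j : Fin n, ℓ j = 1 := by
    have := Finset.sum_range_sub f n
    calc ∑ j : Fin n, ℓ j = ∑ j : Fin n, (f (j + 1) - f j) := by
          exact Finset.sum_congr rfl fun j _ => hf j
      _ = ∑ j ∈ Finset.range n, (f (j + 1) - f j) :=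
          Fin.sum_univ_eq_sum_range (fun j => f (j + 1) - f j) n
      _ = f n - f 0 := Finset.sum_range_sub f n
      _ = 1 := by
          have hfn : f n = 1 := by
            have h' : f n = x (Fin.last n) := by
              show x _ = _
              congr 1
              ext; simp [Fin.last]
            rw [h', hx1]
          have hf0 : f 0 = 0 := by
            have h' : f 0 = x 0 := by
              show x _ = _
              congr 1
            rw [h', hx0]
          rw [hfn, hf0]; ring
  -- the uniform partition
  set y : Fin (n + 1) → ℝ := fun i => (i : ℕ) / n with hydef
  have hy0 : y 0 = 0 := by simp [y]
  have hy1 : y (Fin.last n) = 1 := by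
    simp [y, Fin.last]
    omega
  have hymono : Monotone y := by
    intro a b hab
    have h : ((a : ℕ) : ℝ) ≤ ((b : ℕ) : ℝ) := by exact_mod_cast (Fin.le_iff_val_le_val.1 hab)
    show ((a : ℕ) : ℝ) / n ≤ ((b : ℕ) : ℝ) / n
    gcongr
  have hyℓ : ∀ j : Fin n, y j.succ - y j.castSucc = 1 / n := by
    intro j
    have h1 : ((j.succ : Fin (n + 1)) : ℕ) = (j : ℕ) + 1 := rfl
    have h2 : ((j.castSucc : Fin (n + 1)) : ℕ) = (j : ℕ) := rfl
    simp only [y, h1, h2]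
    push_cast
    field_simp
    ring
  -- cost of uniform partition is φ(1/π)
  have hcost : (1 / (n : ℝ)) * ∑ j : Fin n, φ ((n : ℝ) * (y j.succ - y j.castSucc) / π)
      = φ (1 / π) := by
    have : ∀ j : Fin n, φ ((n : ℝ) * (y j.succ - y j.castSucc) / π) = φ (1 / π) := by
      intro j
      rw [hyℓ j]
      congr 1
      field_simp
    rw [Finset.sum_congr rfl fun j _ => this j]
    simp
    field_simp
  have hmin' := hmin y hymono hy0 hy1
  rw [hcost] at hmin'
  -- the points for Jensen
  set p : Fin n → ℝ := fun j => (n : ℝ) * ℓ j / π with hpdef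
  have hpmem : ∀ j ∈ Finset.univ, p j ∈ Set.Ici (0 : ℝ) := by
    intro j _
    exact div_nonneg (mul_nonneg hn0.le (hℓ0 j)) hπ.le
  have hw1 : ∑ _j : Fin n, (1 / (n : ℝ)) = 1 := by
    simp; field_simp
  have hbary : ∑ j : Fin n, (1 / (n : ℝ)) • p j = 1 / π := by
    simp only [smul_eq_mul, p]
    calc ∑ k : Fin n, 1 / (n : ℝ) * ((n : ℝ) * ℓ k / π) = ∑ k : Fin n, ℓ k * (1 / π) := by
          refine Finset.sum_congr rfl fun k _ => ?_
          field_simp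
      _ = 1 / π := by rw [← Finset.sum_mul, hℓsum]; ring
  have hle : ∑ j : Fin n, (1 / (n : ℝ)) • φ (p j) ≤ φ (∑ j : Fin n, (1 / (n : ℝ)) • p j) := by
    rw [hbary]
    calc ∑ j : Fin n, (1 / (n : ℝ)) • φ (p j)
        = (1 / (n : ℝ)) * ∑ j : Fin n, φ (p j) := by
          rw [Finset.mul_sum]; simp [smul_eq_mul]
      _ ≤ φ (1 / π) := hmin'
  have heq := hφ.eq_of_le_map_sum (fun j _ => by positivity) hw1 hpmem hle
  -- all p j equal, hence all ℓ j equal, hence ℓ j = 1/n > 0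
  intro j
  have hall : ∀ k : Fin n, ℓ k = ℓ j := by
    intro k
    have := heq (Finset.mem_univ k) (Finset.mem_univ j)
    have hπne : π ≠ 0 := hπ.ne'
    have hnne : (n : ℝ) ≠ 0 := hn0.ne'
    have h' : (n:ℝ) * ℓ k / π = n * ℓ j / π := this
    rw [div_left_inj' hπne] at h'
    exact mul_left_cancel₀ hnne h'
  have : (n : ℝ) * ℓ j = 1 := by
    calc (n : ℝ) * ℓ j = ∑ _k : Fin n, ℓ j := by
          simp [Finset.sum_const, nsmul_eq_mul]
      _ = ∑ k : Fin n, ℓ k := Finset.sum_congr rfl fun k _ => (hall k).symm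
      _ = 1 := hℓsum
  have hℓj : 0 < ℓ j := by
    have h1 : ℓ j = 1 / n := by
      field_simp
      linear_combination this
    rw [h1]
    positivity
  exact sub_pos.1 hℓj
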